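/- Consider three agents with symmetric complementarity matrix G having zero diagonal, G₁₂ = 1, and 1 ≥ G₁₃ ≥ G₂₃ > 0, and suppose G₁₃ + G₂₃ ≠ 1. Consider the problem: maximize c over σ ∈ ℝ³ with σ_i ≥ 0 and σ₁ + σ₂ + σ₃ = 1, subject to (G·σ)_i = c for every i with σ_i > 0. Then: (i) this problem has a unique maximizer σ*; (ii) all three agents are active (σ*_i > 0 for all i) if and only if G₁₃ + G₂₃ > 1, in which case σ*₁ = c·(1 + G₁₃ − G₂₃)/(2G₁₃), σ*₂ = c·(1 + G₂₃ − G₁₃)/(2G₂₃), σ*₃ = c·(G₁₃ + G₂₃ − 1)/(2G₁₃G₂₃) with c = 2G₁₃G₂₃/(2(G₁₃ + G₂₃) − 1 − (G₁₃ − G₂₃)²) > 1/2, while if G₁₃ + G₂₃ < 1 the unique maximizer is σ* = (1/2, 1/2, 0) with c = 1/2; (iii) in all cases σ*₁ ≥ σ*₂ ≥ σ*₃. -/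

import Mathlib

open Matrix

private lemma classify13 (g13 g23 : ℝ) (h2 : g23 ≤ g13) (h3 : 0 < g23)
    (a b d c' : ℝ) (ha : 0 ≤ a) (hb : 0 ≤ b) (hd : 0 ≤ d) (hs : a + b + d = 1)
    (e0 : 0 < a → b + g13 * d = c')
    (e1 : 0 < b → a + g23 * d = c')
    (e2 : 0 < d → g13 * a + g23 * b = c') :
    (0 < a ∧ 0 < b ∧ 0 < d ∧ 1 < g13 + g23 ∧
      c' * (2 * (g13 + g23) - 1 - (g13 - g23) ^ 2) = 2 * g13 * g23 ∧
      a * (2 * g13) = c' * (1 + g13 - g23) ∧ b * (2 * g23) = c' * (1 + g23 - g13) ∧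
      d * (2 * g13 * g23) = c' * (g13 + g23 - 1))
    ∨ (c' = 1 / 2 ∧ a = 1 / 2 ∧ b = 1 / 2 ∧ d = 0)
    ∨ c' ≤ g13 / 2 := by
  have hg13 : 0 < g13 := lt_of_lt_of_le h3 h2
  rcases ha.lt_or_eq with hA | hA
  · rcases hb.lt_or_eq with hB | hB
    · rcases hd.lt_or_eq with hD | hD
      · left
        have E0 := e0 hA; have E1 := e1 hB; have E2 := e2 hD
        have hA' : a * (2 * g13) = c' * (1 + g13 - g23) := by
          linear_combination g13 * E1 - g23 * E0 + E2
        have hB' : b * (2 * g23) = c' * (1 + g23 - g13) := by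
          linear_combination g23 * E0 - g13 * E1 + E2
        have hD' : d * (2 * g13 * g23) = c' * (g13 + g23 - 1) := by
          linear_combination g23 * E0 + g13 * E1 - E2
        have hC : c' * (2 * (g13 + g23) - 1 - (g13 - g23) ^ 2) = 2 * g13 * g23 := by
          linear_combination (2 * g13 * g23) * hs - g23 * hA' - g13 * hB' - hD'
        have hcpos : 0 < c' := by nlinarith [mul_pos hA hg13]
        have hlt : 1 < g13 + g23 := by nlinarith [mul_pos (mul_pos hD hg13) h3]
        exact ⟨hA, hB, hD, hlt, hC, hA', hB', hD'⟩
      · right; left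
        have E0 := e0 hA; have E1 := e1 hB
        rw [← hD] at E0 E1 hs
        exact ⟨by linarith, by linarith, by linarith, hD.symm⟩
    · rcases hd.lt_or_eq with hD | hD
      · right; right
        have E0 := e0 hA; have E2 := e2 hD
        rw [← hB] at E0 E2 hs
        nlinarith
      · right; right
        have E0 := e0 hA
        rw [← hB, ← hD] at E0
        nlinarith
  · rcases hb.lt_or_eq with hB | hB
    · rcases hd.lt_or_eq with hD | hD
      · right; right
        have E1 := e1 hB; have E2 := e2 hD
        rw [← hA] at E1 E2 hs
        nlinarith
      · right; right
        have E1 := e1 hB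
        rw [← hA, ← hD] at E1
        nlinarith
    · rcases hd.lt_or_eq with hD | hD
      · right; right
        have E2 := e2 hD
        rw [← hA, ← hB] at E2
        nlinarith
      · exfalso; rw [← hA, ← hB, ← hD] at hs; norm_num at hs

set_option maxHeartbeats 2000000 in
theorem statement_13 (g13 g23 : ℝ)
    (h1 : g13 ≤ 1) (h2 : g23 ≤ g13) (h3 : 0 < g23) (hne : g13 + g23 ≠ 1)
    (G : Matrix (Fin 3) (Fin 3) ℝ)
    (hG : G = !![0, 1, g13; 1, 0, g23; g13, g23, 0])
    (IsOpt : (Fin 3 → ℝ) → Prop)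
    (hIsOpt : ∀ σ : Fin 3 → ℝ, IsOpt σ ↔
      ∃ c : ℝ, (∀ i, 0 ≤ σ i) ∧ (∑ i, σ i) = 1 ∧
        (∀ i, 0 < σ i → G.mulVec σ i = c) ∧
        (∀ (σ' : Fin 3 → ℝ) (c' : ℝ), (∀ i, 0 ≤ σ' i) → (∑ i, σ' i) = 1 →
          (∀ i, 0 < σ' i → G.mulVec σ' i = c') → c' ≤ c)) :
    (∃! σ : Fin 3 → ℝ, IsOpt σ) ∧
    ∀ σ : Fin 3 → ℝ, IsOpt σ →
      ((∀ i, 0 < σ i) ↔ 1 < g13 + g23) ∧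
      (1 < g13 + g23 →
        σ 0 = (2 * g13 * g23 / (2 * (g13 + g23) - 1 - (g13 - g23) ^ 2))
                * (1 + g13 - g23) / (2 * g13) ∧
        σ 1 = (2 * g13 * g23 / (2 * (g13 + g23) - 1 - (g13 - g23) ^ 2))
                * (1 + g23 - g13) / (2 * g23) ∧
        σ 2 = (2 * g13 * g23 / (2 * (g13 + g23) - 1 - (g13 - g23) ^ 2))
                * (g13 + g23 - 1) / (2 * g13 * g23) ∧
        (1 : ℝ) / 2 < 2 * g13 * g23 / (2 * (g13 + g23) - 1 - (g13 - g23) ^ 2)) ∧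
      (g13 + g23 < 1 → σ = ![1/2, 1/2, 0]) ∧
      (σ 1 ≤ σ 0 ∧ σ 2 ≤ σ 1) := by
  have hg13 : 0 < g13 := lt_of_lt_of_le h3 h2
  have hd0 : 0 ≤ g13 - g23 := by linarith
  have hd1 : g13 - g23 < 1 := by linarith
  subst hG
  -- a helper to extract the scalar equations
  have extract : ∀ (σ' : Fin 3 → ℝ) (c' : ℝ), (∑ i, σ' i) = 1 →
      (∀ i, 0 < σ' i → Matrix.mulVec !![0, 1, g13; 1, 0, g23; g13, g23, 0] σ' i = c') →
      (σ' 0 + σ' 1 + σ' 2 = 1) ∧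
      (0 < σ' 0 → σ' 1 + g13 * σ' 2 = c') ∧
      (0 < σ' 1 → σ' 0 + g23 * σ' 2 = c') ∧
      (0 < σ' 2 → g13 * σ' 0 + g23 * σ' 1 = c') := by
    intro σ' c' hsum hb
    refine ⟨by rw [Fin.sum_univ_three] at hsum; exact hsum, ?_, ?_, ?_⟩
    · intro h; have := hb 0 h
      simp [Matrix.mulVec, dotProduct, Fin.sum_univ_three] at this
      linarith
    · intro h; have := hb 1 h
      simp [Matrix.mulVec, dotProduct, Fin.sum_univ_three] at this
      linarith
    · intro h; have := hb 2 h
      simp [Matrix.mulVec, dotProduct, Fin.sum_univ_three] at this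
      linarith
  rcases lt_or_gt_of_ne hne with hlt | hgt
  · -- case g13 + g23 < 1
    have hg1 : g13 < 1 := by linarith
    obtain ⟨σs, hσs⟩ : ∃ v : Fin 3 → ℝ, v = ![1/2, 1/2, 0] := ⟨_, rfl⟩
    have hnn : ∀ i, 0 ≤ σs i := by
      intro i; fin_cases i <;> norm_num [hσs]
    have hsum1 : (∑ i, σs i) = 1 := by
      rw [Fin.sum_univ_three]; norm_num [hσs, Matrix.cons_val_two, Matrix.tail_cons, Matrix.head_cons]
    have hbal : ∀ i, 0 < σs i →
        Matrix.mulVec !![0, 1, g13; 1, 0, g23; g13, g23, 0] σs i = (1/2 : ℝ) := by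
      intro i hi
      fin_cases i
      · simp [hσs, Matrix.mulVec, dotProduct, Fin.sum_univ_three]
      · simp [hσs, Matrix.mulVec, dotProduct, Fin.sum_univ_three]
      · norm_num [hσs] at hi
    have hdom : ∀ (σ' : Fin 3 → ℝ) (c' : ℝ), (∀ i, 0 ≤ σ' i) → (∑ i, σ' i) = 1 →
        (∀ i, 0 < σ' i → Matrix.mulVec !![0, 1, g13; 1, 0, g23; g13, g23, 0] σ' i = c') →
        c' ≤ 1/2 := by
      intro σ' c' hn hsum hb
      obtain ⟨hs', e0, e1, e2⟩ := extract σ' c' hsum hb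
      rcases classify13 g13 g23 h2 h3 _ _ _ _ (hn 0) (hn 1) (hn 2) hs' e0 e1 e2 with
        ⟨_, _, _, hl, _⟩ | ⟨hc, _⟩ | hc
      · linarith
      · linarith
      · linarith
    have hopt : IsOpt σs := (hIsOpt σs).2 ⟨1/2, hnn, hsum1, hbal, hdom⟩
    have huniq : ∀ σ, IsOpt σ → σ = σs := by
      intro σ hσ
      obtain ⟨c, hn, hsum, hb, hdm⟩ := (hIsOpt σ).1 hσ
      have hcge : (1:ℝ)/2 ≤ c := hdm σs (1/2) hnn hsum1 hbal
      obtain ⟨hs', e0, e1, e2⟩ := extract σ c hsum hb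
      rcases classify13 g13 g23 h2 h3 _ _ _ _ (hn 0) (hn 1) (hn 2) hs' e0 e1 e2 with
        ⟨_, _, _, hl, _⟩ | ⟨hc, hx0, hx1, hx2⟩ | hc
      · linarith
      · funext i; fin_cases i
        · simpa [hσs] using hx0
        · simpa [hσs] using hx1
        · simpa [hσs] using hx2
      · linarith
    refine ⟨⟨σs, hopt, huniq⟩, ?_⟩
    intro σ hσ
    have hσeq := huniq σ hσ
    subst hσeq
    refine ⟨?_, ?_, fun _ => hσs, ?_⟩
    · constructor
      · intro h; exact absurd (h 2) (by norm_num [hσs, Matrix.cons_val_two, Matrix.tail_cons, Matrix.head_cons])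
      · intro h; linarith
    · intro h; linarith
    · constructor <;> norm_num [hσs, Matrix.cons_val_two, Matrix.tail_cons, Matrix.head_cons]
  · -- case 1 < g13 + g23
    set C : ℝ := 2 * g13 * g23 / (2 * (g13 + g23) - 1 - (g13 - g23) ^ 2) with hCdef
    have hDpos : 0 < 2 * (g13 + g23) - 1 - (g13 - g23) ^ 2 := by nlinarith
    have hChalf : 1/2 < C := by
      rw [hCdef, lt_div_iff₀ hDpos]
      nlinarith [mul_pos (sub_pos.2 hgt) (sub_pos.2 hgt)]
    have hCpos : 0 < C := by linarith
    have hCD : C * (2 * (g13 + g23) - 1 - (g13 - g23) ^ 2) = 2 * g13 * g23 := by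
      rw [hCdef]; field_simp
    have h2g13 : (0:ℝ) < 2 * g13 := by linarith
    have h2g23 : (0:ℝ) < 2 * g23 := by linarith
    have h2gg : (0:ℝ) < 2 * g13 * g23 := mul_pos h2g13 h3
    obtain ⟨σs, hσs⟩ : ∃ v : Fin 3 → ℝ, v = ![C * (1 + g13 - g23) / (2 * g13),
      C * (1 + g23 - g13) / (2 * g23), C * (g13 + g23 - 1) / (2 * g13 * g23)] := ⟨_, rfl⟩
    have h0pos : 0 < C * (1 + g13 - g23) / (2 * g13) :=
      div_pos (mul_pos hCpos (by linarith)) h2g13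
    have h1pos : 0 < C * (1 + g23 - g13) / (2 * g23) :=
      div_pos (mul_pos hCpos (by linarith)) h2g23
    have h2pos : 0 < C * (g13 + g23 - 1) / (2 * g13 * g23) :=
      div_pos (mul_pos hCpos (by linarith)) h2gg
    have hnn : ∀ i, 0 ≤ σs i := by
      intro i; fin_cases i
      · simpa [hσs] using h0pos.le
      · simpa [hσs] using h1pos.le
      · simpa [hσs] using h2pos.le
    have hsum1 : (∑ i, σs i) = 1 := by
      rw [Fin.sum_univ_three]
      rw [hσs]
      simp only [Matrix.cons_val_zero, Matrix.cons_val_one, Matrix.head_cons,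
        Matrix.cons_val_two, Matrix.tail_cons]
      rw [hCdef]
      field_simp
      ring
    have hbal : ∀ i, 0 < σs i →
        Matrix.mulVec !![0, 1, g13; 1, 0, g23; g13, g23, 0] σs i = C := by
      intro i _
      fin_cases i <;>
        rw [hσs] <;>
        simp only [Matrix.mulVec, dotProduct, Fin.sum_univ_three,
          Matrix.cons_val_zero, Matrix.cons_val_one, Matrix.head_cons,
          Matrix.cons_val_two, Matrix.tail_cons, Matrix.cons_val', Matrix.head_fin_const,
          Matrix.empty_val', Matrix.cons_val_fin_one, Matrix.of_apply, Fin.zero_eta, Fin.mk_one,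
          Fin.reduceFinMk] <;>
        · rw [hCdef]; field_simp; ring
    have hdom : ∀ (σ' : Fin 3 → ℝ) (c' : ℝ), (∀ i, 0 ≤ σ' i) → (∑ i, σ' i) = 1 →
        (∀ i, 0 < σ' i → Matrix.mulVec !![0, 1, g13; 1, 0, g23; g13, g23, 0] σ' i = c') →
        c' ≤ C := by
      intro σ' c' hn hsum hb
      obtain ⟨hs', e0, e1, e2⟩ := extract σ' c' hsum hb
      rcases classify13 g13 g23 h2 h3 _ _ _ _ (hn 0) (hn 1) (hn 2) hs' e0 e1 e2 with
        ⟨_, _, _, _, hc, _⟩ | ⟨hc, _⟩ | hc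
      · exact le_of_eq (mul_right_cancel₀ hDpos.ne' (hc.trans hCD.symm))
      · linarith
      · linarith
    have hopt : IsOpt σs := (hIsOpt σs).2 ⟨C, hnn, hsum1, hbal, hdom⟩
    have huniq : ∀ σ, IsOpt σ → σ = σs := by
      intro σ hσ
      obtain ⟨c, hn, hsum, hb, hdm⟩ := (hIsOpt σ).1 hσ
      have hcge : C ≤ c := hdm σs C hnn hsum1 hbal
      obtain ⟨hs', e0, e1, e2⟩ := extract σ c hsum hb
      rcases classify13 g13 g23 h2 h3 _ _ _ _ (hn 0) (hn 1) (hn 2) hs' e0 e1 e2 with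
        ⟨_, _, _, _, hc, hx0, hx1, hx2⟩ | ⟨hc, _⟩ | hc
      · have hceq : c = C := mul_right_cancel₀ hDpos.ne' (hc.trans hCD.symm)
        rw [hceq] at hx0 hx1 hx2
        have hv0 : σ 0 = C * (1 + g13 - g23) / (2 * g13) := by
          rw [eq_div_iff h2g13.ne']; exact hx0
        have hv1 : σ 1 = C * (1 + g23 - g13) / (2 * g23) := by
          rw [eq_div_iff h2g23.ne']; exact hx1
        have hv2 : σ 2 = C * (g13 + g23 - 1) / (2 * g13 * g23) := by
          rw [eq_div_iff h2gg.ne']; exact hx2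
        funext i; fin_cases i
        · simpa [hσs] using hv0
        · simpa [hσs] using hv1
        · simpa [hσs] using hv2
      · linarith
      · linarith
    refine ⟨⟨σs, hopt, huniq⟩, ?_⟩
    intro σ hσ
    have hσeq := huniq σ hσ
    subst hσeq
    refine ⟨⟨fun _ => hgt, fun _ => ?_⟩, fun _ => ⟨?_, ?_, ?_, hChalf⟩, fun h => absurd h (not_lt.2 hgt.le), ?_, ?_⟩
    · intro i; fin_cases i
      · simpa [hσs] using h0pos
      · simpa [hσs] using h1pos
      · simpa [hσs] using h2pos
    · simp [hσs]
    · simp [hσs]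
    · simp [hσs]
    · rw [hσs]
      simp only [Matrix.cons_val_zero, Matrix.cons_val_one, Matrix.head_cons]
      rw [div_le_div_iff₀ h2g23 h2g13]
      nlinarith [mul_nonneg (mul_nonneg hCpos.le hd0) (by linarith : (0:ℝ) ≤ g13 + g23 - 1)]
    · rw [hσs]
      simp only [Matrix.cons_val_one, Matrix.head_cons, Matrix.cons_val_two,
        Matrix.tail_cons, Matrix.cons_val_zero]
      rw [div_le_div_iff₀ h2gg h2g23]
      nlinarith [mul_nonneg (mul_nonneg (mul_nonneg hCpos.le (by linarith : (0:ℝ) ≤ 1 - g13))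
        (by linarith : (0:ℝ) ≤ 1 + g13 - g23)) h3.le]
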